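/- Let R be a commutative ring and L, S, c_1, c_2 ∈ R. In R[[t]], the coefficient of t^3 in 6(2Lt + 3LSt^2 − S^2t^2) · ((1 + St)(1 + 6Lt − 2St))^{-1} · (1 + c_1 t + c_2 t^2) equals 6(−12c_1L^2 + 5c_1LS − c_1S^2 + 2c_2L + 72L^3 − 54L^2S + 15LS^2 − S^3). -/

import Mathlib

open PowerSeries

/-- SU(2)-model generating function: coefficient of `t^3` (elliptic fourfolds). -/
theorem euler_su2_dim3 {R : Type*} [CommRing R] (L S c₁ c₂ : R) :
    (PowerSeries.coeff (R := R) 3)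
      (6 * (2 * C L * X + 3 * C L * C S * X ^ 2 - C S ^ 2 * X ^ 2) *
        Ring.inverse ((1 + C S * X) * (1 + 6 * C L * X - 2 * C S * X)) *
        (1 + C c₁ * X + C c₂ * X ^ 2))
      = 6 * (-12 * c₁ * L ^ 2 + 5 * c₁ * L * S - c₁ * S ^ 2 + 2 * c₂ * L
          + 72 * L ^ 3 - 54 * L ^ 2 * S + 15 * L * S ^ 2 - S ^ 3) := by
  set a : R⟦X⟧ := C L with ha
  set b : R⟦X⟧ := C S with hb
  set c : R⟦X⟧ := C c₁ with hc
  set d : R⟦X⟧ := C c₂ with hd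
  set A : R⟦X⟧ := 6 * (2 * a * X + 3 * a * b * X ^ 2 - b ^ 2 * X ^ 2) with hA
  set u : R⟦X⟧ := (1 + b * X) * (1 + 6 * a * X - 2 * b * X) with hu
  set P : R⟦X⟧ := 1 + c * X + d * X ^ 2 with hP
  have hUnit : IsUnit u := by
    rw [isUnit_iff_constantCoeff]
    simp [hu]
  set e1 : R := 12 * L with he1
  set e2 : R := 12 * L * c₁ + 30 * L * S - 72 * L ^ 2 - 6 * S ^ 2 with he2
  set e3 : R := 6 * (-12 * c₁ * L ^ 2 + 5 * c₁ * L * S - c₁ * S ^ 2 + 2 * c₂ * L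
      + 72 * L ^ 3 - 54 * L ^ 2 * S + 15 * L * S ^ 2 - S ^ 3) with he3
  set Q : R⟦X⟧ := C e1 * X + C e2 * X ^ 2 + C e3 * X ^ 3 with hQ
  set r : R⟦X⟧ :=
    (-6 * b ^ 2 * d - 6 * b ^ 3 * c - 18 * b ^ 4 + 30 * a * b * d + 90 * a * b ^ 2 * c
      + 222 * a * b ^ 3 - 72 * a ^ 2 * d - 324 * a ^ 2 * b * c - 1188 * a ^ 2 * b ^ 2
      + 432 * a ^ 3 * c + 2808 * a ^ 3 * b - 2592 * a ^ 4)
    + (-12 * b ^ 4 * c - 12 * b ^ 5 + 24 * a * b ^ 2 * d + 96 * a * b ^ 3 * c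
      + 216 * a * b ^ 4 - 72 * a ^ 2 * b * d - 324 * a ^ 2 * b ^ 2 * c
      - 1188 * a ^ 2 * b ^ 3 + 432 * a ^ 3 * b * c + 2808 * a ^ 3 * b ^ 2
      - 2592 * a ^ 4 * b) * X with hr
  have key : A * P = u * Q + X ^ 4 * r := by
    rw [hA, hP, hu, hQ, hr, he1, he2, he3, ha, hb, hc, hd]
    simp only [map_mul, map_add, map_sub, map_pow, map_neg, map_ofNat, map_one]
    ring
  have hcancel : Ring.inverse u * u = 1 := Ring.inverse_mul_cancel u hUnit
  have hE : A * Ring.inverse u * P = Q + Ring.inverse u * (X ^ 4 * r) := by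
    have : A * Ring.inverse u * P = Ring.inverse u * (A * P) := by ring
    rw [this, key, mul_add, ← mul_assoc, hcancel, one_mul]
  rw [hE, map_add]
  have hdvd : (X : R⟦X⟧) ^ 4 ∣ Ring.inverse u * (X ^ 4 * r) :=
    ⟨Ring.inverse u * r, by ring⟩
  have h0 : (coeff 3) (Ring.inverse u * (X ^ 4 * r)) = 0 :=
    (X_pow_dvd_iff.mp hdvd) 3 (by norm_num)
  rw [h0, add_zero]
  have hQ3 : (coeff 3) Q = e3 := by
    rw [hQ]
    simp only [map_add, coeff_C_mul, coeff_X, coeff_X_pow]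
    norm_num
  rw [hQ3, he3]
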